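/- For invertible elements q in a field and natural numbers m, define the Gaussian-type bracket [a; m]_q = ∏_{s=1}^{m} (a q^{1-s} - a⁻¹ q^{s-1})/(q^s - q^{-s}) for an invertible element a. If a and b are commuting invertible elements of an associative algebra over ℂ(q), then [ab; m]_q = ∑_{k=0}^{m} a^{m-k} b^{-k} [b; m-k]_q [a; k]_q. -/

import Mathlib

noncomputable section

open scoped BigOperators

/-- The indeterminate `q`, as an element of the field `ℂ(q)` of rational functions. -/
def qq : RatFunc ℂ := RatFunc.X

/-- The Gaussian-type bracket
`[a; m]_q = ∏_{s=1}^{m} (a q^{1-s} - a⁻¹ q^{s-1})/(q^s - q^{-s})`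
for an invertible element `a` of an associative algebra over `ℂ(q)`
(the product is taken in the indicated order). -/
def qbr {A : Type*} [Ring A] [Algebra (RatFunc ℂ) A] (a : Aˣ) (m : ℕ) : A :=
  (((List.range m).map fun s =>
    (qq ^ ((s : ℤ) + 1) - qq ^ (-((s : ℤ) + 1)))⁻¹ •
      (qq ^ (-(s : ℤ)) • (a : A) - qq ^ ((s : ℤ)) • ((a⁻¹ : Aˣ) : A))).prod)

abbrev FF := RatFunc ℂ

lemma qq_ne_zero : qq ≠ 0 := RatFunc.X_ne_zero

def mu (s : ℕ) : FF := qq ^ ((s : ℤ) + 1) - qq ^ (-((s : ℤ) + 1))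

lemma mu_ne_zero (s : ℕ) : mu s ≠ 0 := by
  have h0 : qq ^ ((s : ℤ) + 1) ≠ qq ^ (-((s : ℤ) + 1)) := by
    intro h
    have h2 : (qq : FF) ^ (((s : ℤ) + 1) + ((s : ℤ) + 1)) = 1 := by
      rw [zpow_add₀ qq_ne_zero]
      nth_rewrite 2 [h]
      rw [← zpow_add₀ qq_ne_zero, show ((s : ℤ) + 1 + -((s : ℤ) + 1)) = 0 by ring, zpow_zero]
    have h3 : (qq : FF) ^ (2 * s + 2 : ℕ) = 1 := by
      rw [← zpow_natCast]
      convert h2 using 2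
      push_cast; ring
    have h4 : (Polynomial.X : Polynomial ℂ) ^ (2 * s + 2) = 1 := by
      apply RatFunc.algebraMap_injective (K := ℂ)
      rw [map_pow, map_one]
      exact h3
    have := congrArg Polynomial.natDegree h4
    simp [Polynomial.natDegree_X_pow] at this
  exact sub_ne_zero.mpr h0

lemma qbr_zero {A : Type*} [Ring A] [Algebra FF A] (x : Aˣ) : qbr x 0 = 1 := by
  simp [qbr]

lemma qbr_succ {A : Type*} [Ring A] [Algebra FF A] (x : Aˣ) (m : ℕ) :
    qbr x (m + 1) = qbr x m *
      ((mu m)⁻¹ • (qq ^ (-(m : ℤ)) • (x : A) - qq ^ ((m : ℤ)) • ((x⁻¹ : Aˣ) : A))) := by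
  simp [qbr, List.range_succ, mu]

lemma map_qbr {A B : Type*} [Ring A] [Ring B] [Algebra FF A] [Algebra FF B]
    (φ : A →ₐ[RatFunc ℂ] B) (x : Aˣ) (m : ℕ) :
    φ (qbr x m) = qbr (Units.map (φ : A →* B) x) m := by
  induction m with
  | zero => simp [qbr_zero]
  | succ n ih =>
    rw [qbr_succ, qbr_succ, map_mul, ih]
    congr 1
    rw [map_smul, map_sub, map_smul, map_smul]
    simp [← map_inv]

lemma pascal (j k : ℕ) :
    qq ^ (-((k : ℤ) + 1)) * mu j + qq ^ ((j : ℤ) + 1) * mu k = mu (j + k + 1) := by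
  simp only [mu]
  push_cast
  rw [mul_sub, mul_sub]
  simp only [← zpow_add₀ qq_ne_zero]
  rw [show (-((k:ℤ)+1) + ((j:ℤ)+1)) = (j:ℤ) - k by ring,
      show (-((k:ℤ)+1) + -((j:ℤ)+1)) = -((j:ℤ)+(k:ℤ)+1+1) by ring,
      show ((j:ℤ)+1 + ((k:ℤ)+1)) = (j:ℤ)+(k:ℤ)+1+1 by ring,
      show ((j:ℤ)+1 + -((k:ℤ)+1)) = (j:ℤ) - k by ring]
  ring

lemma step_term {A : Type*} [Ring A] [Algebra FF A] (hc : ∀ x y : A, x * y = y * x)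
    (a b : Aˣ) (j k : ℕ) :
    (a : A) ^ j * ((b⁻¹ : Aˣ) : A) ^ k * qbr b j * qbr a k *
      ((mu (j + k))⁻¹ • (qq ^ (-((j : ℤ) + k)) • ((a : A) * (b : A)) -
        qq ^ ((j : ℤ) + k) • (((a⁻¹ : Aˣ) : A) * ((b⁻¹ : Aˣ) : A))))
  = ((mu (j + k))⁻¹ * qq ^ (-(k : ℤ)) * mu j) •
      ((a : A) ^ (j + 1) * ((b⁻¹ : Aˣ) : A) ^ k * qbr b (j + 1) * qbr a k)
  + ((mu (j + k))⁻¹ * qq ^ ((j : ℤ)) * mu k) •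
      ((a : A) ^ j * ((b⁻¹ : Aˣ) : A) ^ (k + 1) * qbr b j * qbr a (k + 1)) := by
  letI : CommRing A := { ‹Ring A› with mul_comm := hc }
  rw [qbr_succ b j, qbr_succ a k]
  rw [show (qq : FF) ^ (-((j : ℤ) + k)) = qq ^ (-(j : ℤ)) * qq ^ (-(k : ℤ)) by
        rw [← zpow_add₀ qq_ne_zero]; ring_nf,
      show (qq : FF) ^ ((j : ℤ) + k) = qq ^ ((j : ℤ)) * qq ^ ((k : ℤ)) by
        rw [← zpow_add₀ qq_ne_zero]]
  have h1 : algebraMap FF A (mu j) * algebraMap FF A ((mu j)⁻¹) = 1 := by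
    rw [← map_mul, mul_inv_cancel₀ (mu_ne_zero j), map_one]
  have h2 : algebraMap FF A (mu k) * algebraMap FF A ((mu k)⁻¹) = 1 := by
    rw [← map_mul, mul_inv_cancel₀ (mu_ne_zero k), map_one]
  simp only [Algebra.smul_def, map_mul]
  linear_combination -(algebraMap FF A ((mu (j+k))⁻¹) * algebraMap FF A (qq ^ (-(k:ℤ))) *
      ((a : A) ^ (j+1) * ((b⁻¹ : Aˣ) : A) ^ k * qbr b j * qbr a k) *
      (algebraMap FF A (qq ^ (-(j:ℤ))) * (b : A) - algebraMap FF A (qq ^ ((j:ℤ))) * ((b⁻¹ : Aˣ) : A))) * h1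
    - (algebraMap FF A ((mu (j+k))⁻¹) * algebraMap FF A (qq ^ ((j:ℤ))) *
      ((a : A) ^ j * ((b⁻¹ : Aˣ) : A) ^ (k+1) * qbr b j * qbr a k) *
      (algebraMap FF A (qq ^ (-(k:ℤ))) * (a : A) - algebraMap FF A (qq ^ ((k:ℤ))) * ((a⁻¹ : Aˣ) : A))) * h2

lemma coeff_left (m : ℕ) : (mu m)⁻¹ * qq ^ (-(0 : ℤ)) * mu (m - 0) = 1 := by
  simp [inv_mul_cancel₀ (mu_ne_zero m)]

lemma coeff_right (m : ℕ) : (mu m)⁻¹ * qq ^ ((m : ℤ) - (m : ℤ)) * mu m = 1 := by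
  rw [sub_self, zpow_zero, mul_one, inv_mul_cancel₀ (mu_ne_zero m)]

lemma coeff_mid (m k : ℕ) (hk : k < m) :
    (mu m)⁻¹ * qq ^ (-((k : ℤ) + 1)) * mu (m - (k + 1)) +
      (mu m)⁻¹ * qq ^ ((m : ℤ) - (k : ℤ)) * mu k = 1 := by
  obtain ⟨j, rfl⟩ : ∃ j, m = j + k + 1 := ⟨m - k - 1, by omega⟩
  have e1 : j + k + 1 - (k + 1) = j := by omega
  have e2 : ((j + k + 1 : ℕ) : ℤ) - (k : ℤ) = (j : ℤ) + 1 := by push_cast; ring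
  rw [e1, e2, mul_assoc, mul_assoc, ← mul_add, pascal j k, inv_mul_cancel₀ (mu_ne_zero _)]

theorem comm_stmt {A : Type*} [Ring A] [Algebra FF A] (hc : ∀ x y : A, x * y = y * x)
    (a b : Aˣ) (m : ℕ) :
    qbr (a * b) m = ∑ k ∈ Finset.range (m + 1),
      (a : A) ^ (m - k) * ((b⁻¹ : Aˣ) : A) ^ k * qbr b (m - k) * qbr a k := by
  letI : CommRing A := { ‹Ring A› with mul_comm := hc }
  induction m with
  | zero => simp [qbr_zero]
  | succ m ih =>
    rw [qbr_succ, ih, Finset.sum_mul]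
    have hval : (((a * b)⁻¹ : Aˣ) : A) = ((a⁻¹ : Aˣ) : A) * ((b⁻¹ : Aˣ) : A) := by
      rw [mul_inv_rev, Units.val_mul, mul_comm]
    rw [Units.val_mul, hval]
    have key : ∀ k ∈ Finset.range (m + 1),
        (a : A) ^ (m - k) * ((b⁻¹ : Aˣ) : A) ^ k * qbr b (m - k) * qbr a k *
          ((mu m)⁻¹ • (qq ^ (-(m : ℤ)) • ((a : A) * (b : A)) -
            qq ^ ((m : ℤ)) • (((a⁻¹ : Aˣ) : A) * ((b⁻¹ : Aˣ) : A))))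
      = ((mu m)⁻¹ * qq ^ (-(k : ℤ)) * mu (m - k)) •
          ((a : A) ^ (m + 1 - k) * ((b⁻¹ : Aˣ) : A) ^ k * qbr b (m + 1 - k) * qbr a k)
      + ((mu m)⁻¹ * qq ^ ((m : ℤ) - (k : ℤ)) * mu k) •
          ((a : A) ^ (m - k) * ((b⁻¹ : Aˣ) : A) ^ (k + 1) * qbr b (m - k) * qbr a (k + 1)) := by
      intro k hk
      rw [Finset.mem_range] at hk
      obtain ⟨j, rfl⟩ : ∃ j, m = j + k := ⟨m - k, by omega⟩
      have e1 : j + k - k = j := by omega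
      have e2 : j + k + 1 - k = j + 1 := by omega
      have e3 : (-(((j + k : ℕ)) : ℤ)) = -((j : ℤ) + (k : ℤ)) := by push_cast; ring
      have e4 : (((j + k : ℕ)) : ℤ) = (j : ℤ) + (k : ℤ) := by push_cast; ring
      have e5 : (j : ℤ) + (k : ℤ) - (k : ℤ) = (j : ℤ) := by ring
      rw [e1, e2, e3, e4, e5]
      exact step_term hc a b j k
    rw [Finset.sum_congr rfl key, Finset.sum_add_distrib]
    rw [Finset.sum_range_succ' (fun k => ((mu m)⁻¹ * qq ^ (-(k : ℤ)) * mu (m - k)) •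
          ((a : A) ^ (m + 1 - k) * ((b⁻¹ : Aˣ) : A) ^ k * qbr b (m + 1 - k) * qbr a k)) m]
    rw [Finset.sum_range_succ (fun k => ((mu m)⁻¹ * qq ^ ((m : ℤ) - (k : ℤ)) * mu k) •
          ((a : A) ^ (m - k) * ((b⁻¹ : Aˣ) : A) ^ (k + 1) * qbr b (m - k) * qbr a (k + 1))) m]
    rw [Finset.sum_range_succ' (fun k =>
          (a : A) ^ (m + 1 - k) * ((b⁻¹ : Aˣ) : A) ^ k * qbr b (m + 1 - k) * qbr a k) (m + 1)]
    rw [Finset.sum_range_succ (fun k =>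
          (a : A) ^ (m + 1 - (k + 1)) * ((b⁻¹ : Aˣ) : A) ^ (k + 1) * qbr b (m + 1 - (k + 1)) * qbr a (k + 1)) m]
    simp only [Nat.sub_zero, Nat.sub_self, pow_zero]
    rw [show (mu m)⁻¹ * qq ^ ((m : ℤ) - (m : ℤ)) * mu m = 1 from coeff_right m, one_smul]
    rw [show ((mu m)⁻¹ * qq ^ (-((0 : ℕ) : ℤ)) * mu m) = 1 by
          norm_num [inv_mul_cancel₀ (mu_ne_zero m)], one_smul]
    rw [add_add_add_comm, ← Finset.sum_add_distrib]
    have key2 : ∀ k ∈ Finset.range m,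
        ((mu m)⁻¹ * qq ^ (-((k + 1 : ℕ) : ℤ)) * mu (m - (k + 1))) •
          ((a : A) ^ (m + 1 - (k + 1)) * ((b⁻¹ : Aˣ) : A) ^ (k + 1) * qbr b (m + 1 - (k + 1)) * qbr a (k + 1))
        + ((mu m)⁻¹ * qq ^ ((m : ℤ) - (k : ℤ)) * mu k) •
          ((a : A) ^ (m - k) * ((b⁻¹ : Aˣ) : A) ^ (k + 1) * qbr b (m - k) * qbr a (k + 1))
      = (a : A) ^ (m + 1 - (k + 1)) * ((b⁻¹ : Aˣ) : A) ^ (k + 1) * qbr b (m + 1 - (k + 1)) * qbr a (k + 1) := by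
      intro k hk
      rw [Finset.mem_range] at hk
      have e6 : m + 1 - (k + 1) = m - k := by omega
      have e7 : ((k + 1 : ℕ) : ℤ) = (k : ℤ) + 1 := by push_cast; ring
      rw [e6, e7, ← add_smul, coeff_mid m k hk, one_smul]
    rw [Finset.sum_congr rfl key2]
    ring

/-- If `a` and `b` are commuting invertible elements of an associative algebra over `ℂ(q)`,
then `[ab; m]_q = ∑_{k=0}^{m} a^{m-k} b^{-k} [b; m-k]_q [a; k]_q`. -/
theorem stmt0 {A : Type*} [Ring A] [Algebra (RatFunc ℂ) A] (a b : Aˣ)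
    (hab : (a : A) * b = (b : A) * a) (m : ℕ) :
    qbr (a * b) m =
      ∑ k ∈ Finset.range (m + 1),
        (a : A) ^ (m - k) * ((b⁻¹ : Aˣ) : A) ^ k * qbr b (m - k) * qbr a k := by
  have cab : Commute (a : A) (b : A) := hab
  set s : Set A := {(a : A), ((a⁻¹ : Aˣ) : A), (b : A), ((b⁻¹ : Aˣ) : A)} with hs
  have key_comm : ∀ z ∈ s, Commute (a : A) z ∧ Commute (b : A) z := by
    intro z hz
    rw [hs] at hz
    simp only [Set.mem_insert_iff, Set.mem_singleton_iff] at hz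
    rcases hz with rfl | rfl | rfl | rfl
    · exact ⟨Commute.refl _, cab.symm⟩
    · exact ⟨Commute.units_inv_right (Commute.refl _), cab.symm.units_inv_right⟩
    · exact ⟨cab, Commute.refl _⟩
    · exact ⟨cab.units_inv_right, Commute.units_inv_right (Commute.refl _)⟩
  have l2 : ∀ z ∈ s, ∀ w ∈ s, Commute z w := by
    intro z hz w hw
    rw [hs] at hz
    simp only [Set.mem_insert_iff, Set.mem_singleton_iff] at hz
    rcases hz with rfl | rfl | rfl | rfl
    · exact (key_comm w hw).1
    · exact Commute.units_inv_left (key_comm w hw).1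
    · exact (key_comm w hw).2
    · exact Commute.units_inv_left (key_comm w hw).2
  set S := Algebra.adjoin (RatFunc ℂ) s with hS
  have hc : ∀ x y : S, x * y = y * x := by
    intro x y
    have : Commute (x : A) (y : A) :=
      Algebra.commute_of_mem_adjoin_of_forall_mem_commute y.2 (fun z hz =>
        (Algebra.commute_of_mem_adjoin_of_forall_mem_commute x.2 (fun w hw =>
          l2 z hz w hw)).symm)
    exact Subtype.ext this
  have haS : (a : A) ∈ S := Algebra.subset_adjoin (by rw [hs]; simp)
  have haS' : ((a⁻¹ : Aˣ) : A) ∈ S := Algebra.subset_adjoin (by rw [hs]; simp)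
  have hbS : (b : A) ∈ S := Algebra.subset_adjoin (by rw [hs]; simp)
  have hbS' : ((b⁻¹ : Aˣ) : A) ∈ S := Algebra.subset_adjoin (by rw [hs]; simp)
  let ua : Sˣ := ⟨⟨(a : A), haS⟩, ⟨((a⁻¹ : Aˣ) : A), haS'⟩,
    Subtype.ext (Units.mul_inv a), Subtype.ext (Units.inv_mul a)⟩
  let ub : Sˣ := ⟨⟨(b : A), hbS⟩, ⟨((b⁻¹ : Aˣ) : A), hbS'⟩,
    Subtype.ext (Units.mul_inv b), Subtype.ext (Units.inv_mul b)⟩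
  let φ : S →ₐ[RatFunc ℂ] A := S.val
  have base := comm_stmt hc ua ub m
  have hmul : Units.map (φ : S →* A) (ua * ub) = a * b := Units.ext rfl
  have hua : Units.map (φ : S →* A) ua = a := Units.ext rfl
  have hub : Units.map (φ : S →* A) ub = b := Units.ext rfl
  have hmain := congrArg φ base
  rw [map_qbr, hmul] at hmain
  rw [hmain, map_sum]
  refine Finset.sum_congr rfl fun k _ => ?_
  rw [map_mul, map_mul, map_mul, map_pow, map_pow, map_qbr, map_qbr, hua, hub]
  rfl
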